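/- Let θ_min < θ_max be reals, let c > 0, and let g : [θ_min, θ_max] → ℝ be continuous, differentiable on (θ_min, θ_max), with g(θ_min) = 0, g(θ_max) = 1, 0 < g(θ) < 1 and g′(θ) > 0 on (θ_min, θ_max), and suppose g′(θ)² / (g(θ)(1 − g(θ))) = c² for all θ ∈ (θ_min, θ_max). Then c = π/(θ_max − θ_min) and g(θ) = (1/2)·[1 + sin(π((θ − θ_min)/(θ_max − θ_min) − 1/2))] for all θ ∈ [θ_min, θ_max]. -/

import Mathlib

open Real Set


/-- If `g` is continuous on `[θmin, θmax]`, differentiable on the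
open interval, satisfies the boundary conditions `g(θmin) = 0`, `g(θmax) = 1`,
`0 < g < 1` and `g′ > 0` inside, and the constant-Fisher-information equation
`g′(θ)²/(g(θ)(1−g(θ))) = c²` with `c > 0`, then `c = π/(θmax − θmin)` and
`g(θ) = (1/2)[1 + sin(π((θ − θmin)/(θmax − θmin) − 1/2))]` on `[θmin, θmax]`. -/
theorem least_favorable_prior_sine_solution
    (θmin θmax c : ℝ) (hlt : θmin < θmax) (hc : 0 < c)
    (g : ℝ → ℝ)
    (hcont : ContinuousOn g (Set.Icc θmin θmax))
    (hdiff : ∀ θ ∈ Set.Ioo θmin θmax, DifferentiableAt ℝ g θ)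
    (h0 : g θmin = 0) (h1 : g θmax = 1)
    (hbd : ∀ θ ∈ Set.Ioo θmin θmax, 0 < g θ ∧ g θ < 1)
    (hpos : ∀ θ ∈ Set.Ioo θmin θmax, 0 < deriv g θ)
    (hODE : ∀ θ ∈ Set.Ioo θmin θmax, (deriv g θ) ^ 2 / (g θ * (1 - g θ)) = c ^ 2) :
    c = Real.pi / (θmax - θmin) ∧
      ∀ θ ∈ Set.Icc θmin θmax,
        g θ = (1 / 2) *
          (1 + Real.sin (Real.pi * ((θ - θmin) / (θmax - θmin) - 1 / 2))) := by
  have hLpos : 0 < θmax - θmin := sub_pos.mpr hlt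
  set h : ℝ → ℝ := fun θ => Real.arcsin (2 * g θ - 1) with hh
  have hhcont : ContinuousOn h (Icc θmin θmax) :=
    Real.continuous_arcsin.comp_continuousOn
      ((continuousOn_const.mul hcont).sub continuousOn_const)
  have key : ∀ θ ∈ Ioo θmin θmax, HasDerivAt h c θ := by
    intro θ hθ
    obtain ⟨hg0, hg1⟩ := hbd θ hθ
    have hgg : 0 < g θ * (1 - g θ) := mul_pos hg0 (by linarith)
    have hx1 : 2 * g θ - 1 ≠ -1 := by intro he; nlinarith
    have hx2 : 2 * g θ - 1 ≠ 1 := by intro he; nlinarith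
    have hga : HasDerivAt g (deriv g θ) θ := (hdiff θ hθ).hasDerivAt
    have hinner : HasDerivAt (fun θ => 2 * g θ - 1) (2 * deriv g θ) θ := by
      simpa using (hga.const_mul 2).sub_const 1
    have harc := (Real.hasDerivAt_arcsin hx1 hx2).comp θ hinner
    have h1' : (deriv g θ) ^ 2 = c ^ 2 * (g θ * (1 - g θ)) := by
      have := hODE θ hθ
      field_simp at this
      rw [div_eq_iff (by linarith : (1 - g θ) ≠ 0)] at this
      linear_combination this
    have hd : deriv g θ = c * Real.sqrt (g θ * (1 - g θ)) := by
      calc deriv g θ = Real.sqrt ((deriv g θ) ^ 2) := (Real.sqrt_sq (hpos θ hθ).le).symm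
        _ = Real.sqrt (c ^ 2 * (g θ * (1 - g θ))) := by rw [h1']
        _ = c * Real.sqrt (g θ * (1 - g θ)) := by
            rw [Real.sqrt_mul (sq_nonneg c), Real.sqrt_sq hc.le]
    have hsq : (1 : ℝ) - (2 * g θ - 1) ^ 2 = 2 ^ 2 * (g θ * (1 - g θ)) := by ring
    have hs : 0 < Real.sqrt (g θ * (1 - g θ)) := Real.sqrt_pos.mpr hgg
    have hval : (1 / Real.sqrt (1 - (2 * g θ - 1) ^ 2)) * (2 * deriv g θ) = c := by
      rw [hsq, Real.sqrt_mul (by norm_num : (0:ℝ) ≤ 2 ^ 2),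
        Real.sqrt_sq (by norm_num : (0:ℝ) ≤ 2), hd]
      have ha : Real.sqrt (g θ) ≠ 0 := ne_of_gt (Real.sqrt_pos.mpr hg0)
      have hb : Real.sqrt (1 - g θ) ≠ 0 := ne_of_gt (Real.sqrt_pos.mpr (by linarith))
      field_simp
    have : HasDerivAt h ((1 / Real.sqrt (1 - (2 * g θ - 1) ^ 2)) * (2 * deriv g θ)) θ := harc
    rwa [hval] at this
  set F : ℝ → ℝ := fun θ => h θ - c * θ with hF
  have hFcont : ContinuousOn F (Icc θmin θmax) :=
    hhcont.sub (continuousOn_const.mul continuousOn_id)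
  have hFkey : ∀ θ ∈ interior (Icc θmin θmax), HasDerivAt F 0 θ := by
    intro θ hθ
    rw [interior_Icc] at hθ
    have := (key θ hθ).sub ((hasDerivAt_id θ).const_mul c)
    rw [mul_one, sub_self] at this
    exact this
  have hFdiff : DifferentiableOn ℝ F (interior (Icc θmin θmax)) :=
    fun θ hθ => ((hFkey θ hθ).differentiableAt).differentiableWithinAt
  have hFd0 : ∀ θ ∈ interior (Icc θmin θmax), deriv F θ = 0 :=
    fun θ hθ => (hFkey θ hθ).deriv
  have hmono : MonotoneOn F (Icc θmin θmax) :=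
    monotoneOn_of_deriv_nonneg (convex_Icc _ _) hFcont hFdiff
      (fun θ hθ => (hFd0 θ hθ).ge)
  have hanti : AntitoneOn F (Icc θmin θmax) :=
    antitoneOn_of_deriv_nonpos (convex_Icc _ _) hFcont hFdiff
      (fun θ hθ => (hFd0 θ hθ).le)
  have hmem0 : θmin ∈ Icc θmin θmax := ⟨le_refl _, hlt.le⟩
  have hFconst : ∀ θ ∈ Icc θmin θmax, F θ = F θmin := by
    intro θ hθ
    exact le_antisymm (hanti hmem0 hθ hθ.1) (hmono hmem0 hθ hθ.1)
  have hhmin : h θmin = -(π / 2) := by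
    simp only [hh]
    rw [h0]
    norm_num [Real.arcsin_neg_one]
  have hhmax : h θmax = π / 2 := by
    simp only [hh]
    rw [h1]
    norm_num [Real.arcsin_one]
  have hlin : ∀ θ ∈ Icc θmin θmax, h θ = c * (θ - θmin) - π / 2 := by
    intro θ hθ
    have := hFconst θ hθ
    simp only [hF] at this
    rw [hhmin] at this
    linarith
  have hcval : c = π / (θmax - θmin) := by
    have := hlin θmax ⟨hlt.le, le_refl _⟩
    rw [hhmax] at this
    field_simp
    linarith
  refine ⟨hcval, fun θ hθ => ?_⟩
  have hgbd : 0 ≤ g θ ∧ g θ ≤ 1 := by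
    rcases eq_or_lt_of_le hθ.1 with he | hl
    · rw [← he, h0]; norm_num
    rcases eq_or_lt_of_le hθ.2 with he | hr
    · rw [he, h1]; norm_num
    · obtain ⟨a, b⟩ := hbd θ ⟨hl, hr⟩
      exact ⟨a.le, b.le⟩
  have hsin : Real.sin (h θ) = 2 * g θ - 1 :=
    Real.sin_arcsin (by linarith [hgbd.1]) (by linarith [hgbd.2])
  rw [hlin θ hθ, hcval] at hsin
  have harg : π / (θmax - θmin) * (θ - θmin) - π / 2
      = π * ((θ - θmin) / (θmax - θmin) - 1 / 2) := by
    field_simp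
  rw [harg] at hsin
  linarith
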